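/- For the solid torus S = { (x,y,z) ∈ ℝ³ | (x²+y²+z²+3)² ≤ 16(x²+y²) }, the area v(t) of the planar slice S ∩ {x = t} satisfies v(0) = 2π, v(1) = 8, v(-1) = 8, and v(3) = v(-3) = 0. -/

import Mathlib

open MeasureTheory Real Set

/-- The lemniscate region `(y²+z²)² ≤ 8(y²−z²)`. -/
def myLem : Set (ℝ × ℝ) := {q | (q.1 ^ 2 + q.2 ^ 2) ^ 2 ≤ 8 * (q.1 ^ 2 - q.2 ^ 2)}

lemma myLem_meas : MeasurableSet myLem := by
  apply measurableSet_le <;> fun_prop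

/-- Fubini for set integrals over a product, integrating the first coordinate inside. -/
lemma mySetIntegralProdSymm (f : ℝ × ℝ → ℝ) {s t : Set ℝ}
    (hf : IntegrableOn f (s ×ˢ t)) :
    ∫ z in s ×ˢ t, f z = ∫ y in t, ∫ x in s, f (x, y) := by
  rw [Measure.volume_eq_prod, ← Measure.prod_restrict]
  refine integral_prod_symm f ?_
  rw [Measure.prod_restrict]
  rw [Measure.volume_eq_prod] at hf
  exact hf

/-- Volume of a unit disk centered at `(c,0)` in `ℝ × ℝ`. -/
lemma vol_unit_disk (c : ℝ) :
    volume {q : ℝ × ℝ | (q.1 - c) ^ 2 + q.2 ^ 2 ≤ 1} = NNReal.pi := by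
  have hmeas : MeasurableSet {q : ℝ × ℝ | (q.1 - c) ^ 2 + q.2 ^ 2 ≤ 1} := by
    apply measurableSet_le <;> fun_prop
  have hpre := Complex.volume_preserving_equiv_real_prod.measure_preimage
    hmeas.nullMeasurableSet
  have hset : Complex.measurableEquivRealProd ⁻¹' {q : ℝ × ℝ | (q.1 - c) ^ 2 + q.2 ^ 2 ≤ 1}
      = Metric.closedBall (c : ℂ) 1 := by
    ext z
    simp only [Set.mem_preimage, Set.mem_setOf_eq, Metric.mem_closedBall,
      Complex.dist_eq, Complex.measurableEquivRealProd_apply]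
    rw [show ‖z - ↑c‖ ≤ 1 ↔ ‖z - ↑c‖ ^ 2 ≤ 1 by
      constructor
      · intro h; nlinarith [norm_nonneg (z - ↑c)]
      · intro h; nlinarith [norm_nonneg (z - ↑c)]]
    rw [Complex.sq_norm, Complex.normSq_apply]
    simp only [Complex.sub_re, Complex.sub_im, Complex.ofReal_re, Complex.ofReal_im, sub_zero]
    constructor <;> intro h <;> nlinarith
  rw [← hpre, hset, Complex.volume_closedBall]
  simp

lemma mem_myLem_iff (r θ : ℝ) (hr : 0 < r) :
    ((r * cos θ, r * sin θ) : ℝ × ℝ) ∈ myLem ↔ r ^ 2 ≤ 8 * cos (2*θ) := by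
  have hcs : sin θ ^ 2 + cos θ ^ 2 = 1 := sin_sq_add_cos_sq θ
  have hc2 : cos (2*θ) = cos θ ^ 2 - sin θ ^ 2 := Real.cos_two_mul' θ
  have e : (r * cos θ) ^ 2 + (r * sin θ) ^ 2 = r ^ 2 := by
    linear_combination r ^ 2 * hcs
  have e2 : (r * cos θ) ^ 2 - (r * sin θ) ^ 2 = r ^ 2 * cos (2*θ) := by
    linear_combination (-(r ^ 2)) * hc2
  simp only [myLem, mem_setOf_eq]
  rw [e, e2]
  constructor
  · intro h
    nlinarith [mul_pos hr hr]
  · intro h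
    nlinarith [mul_pos hr hr, sq_nonneg r]

lemma inner_int (θ : ℝ) :
    ∫ r in Ioc (0:ℝ) 3, r * myLem.indicator (fun _ => (1:ℝ)) (r * cos θ, r * sin θ)
      = 4 * max (cos (2*θ)) 0 := by
  by_cases hc : 0 < cos (2*θ)
  · set a := Real.sqrt (8 * cos (2*θ)) with ha
    have ha2 : a ^ 2 = 8 * cos (2*θ) := Real.sq_sqrt (by positivity)
    have ha0 : 0 < a := Real.sqrt_pos.mpr (by positivity)
    have ha3 : a ≤ 3 := by
      nlinarith [Real.cos_le_one (2*θ)]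
    have congr1 : EqOn (fun r : ℝ => r * myLem.indicator (fun _ => (1:ℝ)) (r * cos θ, r * sin θ))
        ((Ioc (0:ℝ) a).indicator (fun r => r)) (Ioc (0:ℝ) 3) := by
      intro r hr
      have hr0 : (0:ℝ) < r := hr.1
      have hiff : (r * cos θ, r * sin θ) ∈ myLem ↔ r ≤ a := by
        rw [mem_myLem_iff r θ hr0]
        constructor
        · intro h
          nlinarith
        · intro h
          nlinarith
      by_cases hmem : (r * cos θ, r * sin θ) ∈ myLem
      · have hra : r ∈ Ioc (0:ℝ) a := ⟨hr0, hiff.mp hmem⟩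
        simp [Set.indicator_of_mem hmem, Set.indicator_of_mem hra]
      · have hra : r ∉ Ioc (0:ℝ) a := by
          intro hmem'
          exact hmem (hiff.mpr hmem'.2)
        simp [Set.indicator_of_notMem hmem, Set.indicator_of_notMem hra]
    rw [setIntegral_congr_fun measurableSet_Ioc congr1,
      setIntegral_indicator measurableSet_Ioc]
    rw [show Ioc (0:ℝ) 3 ∩ Ioc (0:ℝ) a = Ioc (0:ℝ) a by
      rw [Set.Ioc_inter_Ioc]; simp [min_eq_right ha3]]
    rw [← intervalIntegral.integral_of_le ha0.le, integral_id]
    rw [max_eq_left hc.le]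
    nlinarith
  · push_neg at hc
    have congr0 : EqOn (fun r : ℝ => r * myLem.indicator (fun _ => (1:ℝ)) (r * cos θ, r * sin θ))
        (fun _ => (0:ℝ)) (Ioc (0:ℝ) 3) := by
      intro r hr
      have hr0 : (0:ℝ) < r := hr.1
      have hmem : (r * cos θ, r * sin θ) ∉ myLem := by
        rw [mem_myLem_iff r θ hr0]
        intro h
        nlinarith [mul_pos hr0 hr0]
      simp [Set.indicator_of_notMem hmem]
    rw [setIntegral_congr_fun measurableSet_Ioc congr0]
    simp [max_eq_right hc]

lemma int_4cos (a b : ℝ) : ∫ x in a..b, 4 * cos (2*x) = 2 * sin (2*b) - 2 * sin (2*a) := by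
  have h : ∀ x ∈ Set.uIcc a b, HasDerivAt (fun y : ℝ => 2 * sin (2*y)) (4 * cos (2*x)) x := by
    intro x _
    have h1 : HasDerivAt (fun y : ℝ => 2*y) 2 x := by
      simpa using (hasDerivAt_id x).const_mul (2:ℝ)
    have h2 := (Real.hasDerivAt_sin (2*x)).comp x h1
    have h3 := h2.const_mul (2:ℝ)
    exact h3.congr_deriv (by ring)
  rw [intervalIntegral.integral_eq_sub_of_hasDerivAt h
    (by apply Continuous.intervalIntegrable; fun_prop)]

lemma outer_int : ∫ θ in Ioo (-π) π, 4 * max (cos (2*θ)) 0 = 8 := by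
  set f : ℝ → ℝ := fun θ => 4 * max (cos (2*θ)) 0 with hf
  have hcont : Continuous f :=
    continuous_const.mul ((Real.continuous_cos.comp (continuous_const.mul continuous_id)).max
      continuous_const)
  have hii : ∀ a b : ℝ, IntervalIntegrable f volume a b := fun a b =>
    hcont.intervalIntegrable a b
  have hπ : (0:ℝ) < π := pi_pos
  rw [← integral_Ioc_eq_integral_Ioo, ← intervalIntegral.integral_of_le (by linarith)]
  have h45 : ∫ θ in (π/4)..π, f θ = (∫ θ in (π/4)..(3*π/4), f θ) + ∫ θ in (3*π/4)..π, f θ :=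
    (intervalIntegral.integral_add_adjacent_intervals (hii _ _) (hii _ _)).symm
  have h345 : ∫ θ in (-(π/4))..π, f θ = (∫ θ in (-(π/4))..(π/4), f θ) + ∫ θ in (π/4)..π, f θ :=
    (intervalIntegral.integral_add_adjacent_intervals (hii _ _) (hii _ _)).symm
  have h2345 : ∫ θ in (-(3*π/4))..π, f θ
      = (∫ θ in (-(3*π/4))..(-(π/4)), f θ) + ∫ θ in (-(π/4))..π, f θ :=
    (intervalIntegral.integral_add_adjacent_intervals (hii _ _) (hii _ _)).symm
  have h12345 : ∫ θ in (-π)..π, f θ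
      = (∫ θ in (-π)..(-(3*π/4)), f θ) + ∫ θ in (-(3*π/4))..π, f θ :=
    (intervalIntegral.integral_add_adjacent_intervals (hii _ _) (hii _ _)).symm
  rw [h12345, h2345, h345, h45]
  have p1 : ∫ θ in (-π)..(-(3*π/4)), f θ = 2 := by
    rw [intervalIntegral.integral_congr (g := fun θ => 4 * cos (2*θ))
      (by
        rw [Set.uIcc_of_le (by linarith)]
        intro θ hθ
        have h1 : cos (2*θ) = cos (2*θ + 2*π) := (Real.cos_add_two_pi (2*θ)).symm
        have h2 : 0 ≤ cos (2*θ) := by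
          rw [h1]
          apply Real.cos_nonneg_of_mem_Icc
          constructor
          · have := hθ.1; simp at this ⊢; linarith
          · have := hθ.2; simp at this ⊢; linarith
        simp [hf, max_eq_left h2])]
    rw [int_4cos]
    rw [show 2 * (-(3*π/4)) = π/2 - 2*π by ring, show 2 * (-π) = -(2*π) by ring]
    rw [Real.sin_sub_two_pi, Real.sin_neg, Real.sin_two_pi, Real.sin_pi_div_two]
    ring
  have p2 : ∫ θ in (-(3*π/4))..(-(π/4)), f θ = 0 := by
    rw [intervalIntegral.integral_congr (g := fun _ => (0:ℝ))
      (by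
        rw [Set.uIcc_of_le (by linarith)]
        intro θ hθ
        have h2 : cos (2*θ) ≤ 0 := by
          rw [← Real.cos_neg]
          apply Real.cos_nonpos_of_pi_div_two_le_of_le
          · have := hθ.2; simp at this ⊢; linarith
          · have := hθ.1; simp at this ⊢; linarith
        simp [hf, max_eq_right h2])]
    simp
  have p3 : ∫ θ in (-(π/4))..(π/4), f θ = 4 := by
    rw [intervalIntegral.integral_congr (g := fun θ => 4 * cos (2*θ))
      (by
        rw [Set.uIcc_of_le (by linarith)]
        intro θ hθ
        have h2 : 0 ≤ cos (2*θ) := by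
          apply Real.cos_nonneg_of_mem_Icc
          constructor
          · have := hθ.1; simp at this ⊢; linarith
          · have := hθ.2; simp at this ⊢; linarith
        simp [hf, max_eq_left h2])]
    rw [int_4cos]
    rw [show 2 * (π/4) = π/2 by ring, show 2 * (-(π/4)) = -(π/2) by ring]
    rw [Real.sin_neg, Real.sin_pi_div_two]
    ring
  have p4 : ∫ θ in (π/4)..(3*π/4), f θ = 0 := by
    rw [intervalIntegral.integral_congr (g := fun _ => (0:ℝ))
      (by
        rw [Set.uIcc_of_le (by linarith)]
        intro θ hθ
        have h2 : cos (2*θ) ≤ 0 := by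
          apply Real.cos_nonpos_of_pi_div_two_le_of_le
          · have := hθ.1; simp at this ⊢; linarith
          · have := hθ.2; simp at this ⊢; linarith
        simp [hf, max_eq_right h2])]
    simp
  have p5 : ∫ θ in (3*π/4)..π, f θ = 2 := by
    rw [intervalIntegral.integral_congr (g := fun θ => 4 * cos (2*θ))
      (by
        rw [Set.uIcc_of_le (by linarith)]
        intro θ hθ
        have h1 : cos (2*θ) = cos (2*θ - 2*π) := (Real.cos_sub_two_pi (2*θ)).symm
        have h2 : 0 ≤ cos (2*θ) := by
          rw [h1]
          apply Real.cos_nonneg_of_mem_Icc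
          constructor
          · have := hθ.1; simp at this ⊢; linarith
          · have := hθ.2; simp at this ⊢; linarith
        simp [hf, max_eq_left h2])]
    rw [int_4cos]
    rw [show 2 * (3*π/4) = -(π/2) + 2*π by ring]
    rw [Real.sin_add_two_pi, Real.sin_neg, Real.sin_two_pi, Real.sin_pi_div_two]
    ring
  rw [p1, p2, p3, p4, p5]
  ring

lemma vol_myLem : volume myLem = 8 := by
  have hK : myLem ⊆ Set.Icc ((-3:ℝ), (-3:ℝ)) ((3:ℝ), (3:ℝ)) := by
    intro q hq
    simp only [myLem, mem_setOf_eq] at hq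
    constructor
    · constructor
      · show (-3:ℝ) ≤ q.1
        nlinarith [sq_nonneg q.2, sq_nonneg (q.1^2 + q.2^2), sq_nonneg (q.1 + 3), sq_nonneg (q.1 - 3)]
      · show (-3:ℝ) ≤ q.2
        nlinarith [sq_nonneg q.1, sq_nonneg (q.2 + 3), sq_nonneg (q.2 - 3)]
    · constructor
      · show q.1 ≤ (3:ℝ)
        nlinarith [sq_nonneg q.2, sq_nonneg (q.1 + 3), sq_nonneg (q.1 - 3)]
      · show q.2 ≤ (3:ℝ)
        nlinarith [sq_nonneg q.1, sq_nonneg (q.2 + 3), sq_nonneg (q.2 - 3)]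
  have hfin : volume myLem ≠ ⊤ :=
    ne_top_of_le_ne_top (isCompact_Icc.measure_lt_top).ne (measure_mono hK)
  -- the indicator function
  set f : ℝ × ℝ → ℝ := myLem.indicator (fun _ => (1:ℝ)) with hfdef
  have hm : Measurable (fun p : ℝ × ℝ => (p.1 * cos p.2, p.1 * sin p.2) : ℝ × ℝ → ℝ × ℝ) := by
    fun_prop
  have hFmeas : Measurable (fun p : ℝ × ℝ => p.1 * f (p.1 * cos p.2, p.1 * sin p.2)) := by
    apply measurable_fst.mul
    exact (measurable_const.indicator myLem_meas).comp hm
  have key : ∫ q, f q = 8 := by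
    rw [← integral_comp_polarCoord_symm]
    have hstep1 : ∫ p in polarCoord.target, p.1 • f (polarCoord.symm p)
        = ∫ p in Ioc (0:ℝ) 3 ×ˢ Ioo (-π) π, p.1 * f (p.1 * cos p.2, p.1 * sin p.2) := by
      rw [polarCoord_target]
      rw [setIntegral_congr_fun (measurableSet_Ioi.prod measurableSet_Ioo)
        (g := fun p => p.1 * f (p.1 * cos p.2, p.1 * sin p.2))
        (fun p _ => by rw [polarCoord_symm_apply]; simp [smul_eq_mul])]
      apply setIntegral_eq_of_subset_of_ae_diff_eq_zero
        (measurableSet_Ioi.prod measurableSet_Ioo).nullMeasurableSet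
        (Set.prod_mono Set.Ioc_subset_Ioi_self subset_rfl)
      refine Filter.Eventually.of_forall (fun p hp => ?_)
      obtain ⟨hpt, hps⟩ := hp
      have hp1 : 3 < p.1 := by
        by_contra hle
        push_neg at hle
        exact hps ⟨⟨hpt.1, hle⟩, hpt.2⟩
      have hp0 : (0:ℝ) < p.1 := hpt.1
      have hnm : (p.1 * cos p.2, p.1 * sin p.2) ∉ myLem := by
        rw [mem_myLem_iff _ _ hp0]
        intro h
        nlinarith [Real.cos_le_one (2 * p.2)]
      simp [hfdef, Set.indicator_of_notMem hnm]
    rw [hstep1]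
    have hint : IntegrableOn (fun p : ℝ × ℝ => p.1 * f (p.1 * cos p.2, p.1 * sin p.2))
        (Ioc (0:ℝ) 3 ×ˢ Ioo (-π) π) := by
      apply Measure.integrableOn_of_bounded (M := 3)
      · refine ne_top_of_le_ne_top ((isCompact_Icc
          (a := ((0:ℝ), -π)) (b := ((3:ℝ), π))).measure_lt_top).ne (measure_mono ?_)
        intro p hp
        exact ⟨⟨hp.1.1.le, hp.2.1.le⟩, ⟨hp.1.2, hp.2.2.le⟩⟩
      · exact hFmeas.aestronglyMeasurable
      · filter_upwards [ae_restrict_mem (measurableSet_Ioc.prod measurableSet_Ioo)] with p hp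
        have h01 : |f (p.1 * cos p.2, p.1 * sin p.2)| ≤ 1 := by
          by_cases hmem : (p.1 * cos p.2, p.1 * sin p.2) ∈ myLem
          · simp [hfdef, Set.indicator_of_mem hmem]
          · simp [hfdef, Set.indicator_of_notMem hmem]
        have hp1 : 0 < p.1 := hp.1.1
        have hp3 : p.1 ≤ 3 := hp.1.2
        rw [Real.norm_eq_abs, abs_mul, abs_of_pos hp1]
        calc p.1 * |f (p.1 * cos p.2, p.1 * sin p.2)| ≤ 3 * 1 := by
              apply mul_le_mul hp3 h01 (abs_nonneg _) (by norm_num)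
          _ = 3 := by norm_num
    rw [mySetIntegralProdSymm _ hint]
    have : ∀ θ : ℝ, ∫ r in Ioc (0:ℝ) 3, r * f (r * cos θ, r * sin θ) = 4 * max (cos (2*θ)) 0 :=
      fun θ => inner_int θ
    rw [setIntegral_congr_fun measurableSet_Ioo (fun θ _ => this θ)]
    exact outer_int
  have : volume myLem = ENNReal.ofReal (∫ q, f q) := by
    rw [hfdef]
    rw [show (fun _ => (1:ℝ)) = (1 : ℝ × ℝ → ℝ) from rfl]
    rw [integral_indicator_one myLem_meas]
    rw [measureReal_def, ENNReal.ofReal_toReal hfin]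
  rw [this, key]
  norm_num

/-- Special values of the slice-area function of the solid torus
`(x²+y²+z²+3)² ≤ 16(x²+y²)`. -/
theorem torus_slice_areas
    (v : ℝ → ENNReal)
    (hv : ∀ t : ℝ, v t = volume {q : ℝ × ℝ |
        (t ^ 2 + q.1 ^ 2 + q.2 ^ 2 + 3) ^ 2 ≤ 16 * (t ^ 2 + q.1 ^ 2)}) :
    v 0 = ENNReal.ofReal (2 * π) ∧ v 1 = 8 ∧ v (-1) = 8 ∧ v 3 = 0 ∧ v (-3) = 0 := by
  have h1 : ∀ t : ℝ, t ^ 2 = 1 → v t = 8 := by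
    intro t ht
    rw [hv t, ht]
    rw [show {q : ℝ × ℝ | (1 + q.1 ^ 2 + q.2 ^ 2 + 3) ^ 2 ≤ 16 * (1 + q.1 ^ 2)} = myLem by
      ext q
      simp only [myLem, mem_setOf_eq]
      constructor <;> intro h <;> nlinarith]
    exact vol_myLem
  have h9 : ∀ t : ℝ, t ^ 2 = 9 → v t = 0 := by
    intro t ht
    rw [hv t, ht]
    refine measure_mono_null ?_ (measure_singleton ((0:ℝ), (0:ℝ)))
    · intro q hq
      simp only [mem_setOf_eq] at hq
      have h1 : q.1 = 0 := by nlinarith [sq_nonneg q.1, sq_nonneg q.2, sq_nonneg (q.1^2 + q.2^2)]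
      have h2 : q.2 = 0 := by nlinarith [sq_nonneg q.1, sq_nonneg q.2, sq_nonneg (q.1^2 + q.2^2)]
      simp [Set.mem_singleton_iff, Prod.ext_iff, h1, h2]
  refine ⟨?_, h1 1 (by norm_num), h1 (-1) (by norm_num), h9 3 (by norm_num), h9 (-3) (by norm_num)⟩
  rw [hv 0]
  have hsplit : {q : ℝ × ℝ | ((0:ℝ) ^ 2 + q.1 ^ 2 + q.2 ^ 2 + 3) ^ 2 ≤ 16 * ((0:ℝ) ^ 2 + q.1 ^ 2)}
      = {q : ℝ × ℝ | (q.1 - 2) ^ 2 + q.2 ^ 2 ≤ 1} ∪ {q : ℝ × ℝ | (q.1 - (-2)) ^ 2 + q.2 ^ 2 ≤ 1} := by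
    ext q
    simp only [mem_setOf_eq, Set.mem_union]
    constructor
    · intro h
      rcases le_or_gt 0 q.1 with hq | hq
      · left; nlinarith [sq_nonneg (q.1^2 + q.2^2 + 3 + 4*q.1)]
      · right; nlinarith [sq_nonneg (q.1^2 + q.2^2 + 3 - 4*q.1)]
    · intro h
      rcases h with h | h <;> nlinarith [sq_nonneg q.2, sq_nonneg q.1]
  rw [hsplit]
  have hdisj : Disjoint {q : ℝ × ℝ | (q.1 - 2) ^ 2 + q.2 ^ 2 ≤ 1}
      {q : ℝ × ℝ | (q.1 - (-2)) ^ 2 + q.2 ^ 2 ≤ 1} := by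
    rw [Set.disjoint_left]
    intro q hq hq'
    simp only [mem_setOf_eq] at hq hq'
    nlinarith [sq_nonneg q.2]
  rw [measure_union hdisj (by apply measurableSet_le <;> fun_prop)]
  rw [vol_unit_disk 2, vol_unit_disk (-2)]
  rw [show ENNReal.ofReal (2 * π) = ENNReal.ofReal π + ENNReal.ofReal π by
    rw [← ENNReal.ofReal_add pi_pos.le pi_pos.le]; ring_nf]
  rw [show ENNReal.ofReal π = (NNReal.pi : ENNReal) by
    rw [← NNReal.coe_real_pi, ENNReal.ofReal_coe_nnreal]]
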